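/- Tree-orientation vector satisfies detailed balance: let n ≥ 1, let M : Matrix (Fin n) (Fin n) ℝ be detailed balanced with respect to a positive vector w₀ : Fin n → ℝ (w₀ i > 0 for all i, and M i j * w₀ j = M j i * w₀ i for all i, j). Let G : SimpleGraph (Fin n) be a tree (G.IsTree) and for k : Fin n define w^G k = ∏ over all ordered pairs (i, j) with G.Adj i j and G.dist i k = G.dist j k + 1 of M i j. Then w^G itself satisfies detailed balance with M: for all j, k : Fin n, M k j * w^G k = M j k * w^G j. -/

import Mathlib

open scoped Classical

open SimpleGraph

/-- In a tree, distances to any vertex of two adjacent vertices differ by exactly one. -/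
lemma tree_adj_dist_step {V : Type*} {G : SimpleGraph V} (hG : G.IsTree)
    {a b : V} (hab : G.Adj a b) (k : V) :
    G.dist a k = G.dist b k + 1 ∨ G.dist b k = G.dist a k + 1 := by
  obtain ⟨p, hp⟩ := hG.isConnected.exists_walk_length_eq_dist a k
  by_cases hb : b ∈ p.support
  · left
    have hsplit := p.take_spec hb
    have hlen : (p.takeUntil b hb).length + (p.dropUntil b hb).length = p.length := by
      rw [← SimpleGraph.Walk.length_append, hsplit]
    have h1 : 1 ≤ (p.takeUntil b hb).length := by
      rcases Nat.eq_zero_or_pos (p.takeUntil b hb).length with h0 | h0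
      · exact absurd (SimpleGraph.Walk.eq_of_length_eq_zero h0) hab.ne
      · exact h0
    have h2 : G.dist b k ≤ (p.dropUntil b hb).length := SimpleGraph.dist_le _
    have h3 : G.dist a k ≤ G.dist b k + 1 := by
      have := hG.isConnected.dist_triangle (u := a) (v := b) (w := k)
      have hone : G.dist a b = 1 := SimpleGraph.dist_eq_one_iff_adj.mpr hab
      omega
    omega
  · right
    have hpath : (SimpleGraph.Walk.cons hab.symm p).IsPath :=
      (p.isPath_of_length_eq_dist hp).cons hb
    obtain ⟨q, hq, hqlen⟩ := hG.isConnected.exists_path_of_dist b k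
    have := hG.IsAcyclic.path_unique ⟨SimpleGraph.Walk.cons hab.symm p, hpath⟩ ⟨q, hq⟩
    have hlen : (SimpleGraph.Walk.cons hab.symm p).length = q.length := by
      rw [show q = SimpleGraph.Walk.cons hab.symm p from congrArg Subtype.val this.symm]
    simp only [SimpleGraph.Walk.length_cons] at hlen
    omega

/-- If an edge `(a,b)` is oriented toward `k` (i.e. `a` is farther from `k`), and
`j` is adjacent to `k`, then unless `{a,b} = {j,k}` the edge is also oriented toward
`j` in the same direction. -/
lemma tree_orientation_transfer {V : Type*} {G : SimpleGraph V} (hG : G.IsTree)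
    {j k a b : V} (hjk : G.Adj j k) (hab : G.Adj a b)
    (h1 : (a, b) ≠ (j, k)) (h2 : (a, b) ≠ (k, j))
    (hk : G.dist a k = G.dist b k + 1) : G.dist a j = G.dist b j + 1 := by
  rcases tree_adj_dist_step hG hab j with h | h
  · exact h
  exfalso
  -- flip configuration: derive exact distances
  have hak : G.dist j a = G.dist k a + 1 ∨ G.dist k a = G.dist j a + 1 :=
    tree_adj_dist_step hG hjk a
  have hbk : G.dist j b = G.dist k b + 1 ∨ G.dist k b = G.dist j b + 1 :=
    tree_adj_dist_step hG hjk b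
  rw [SimpleGraph.dist_comm (u := j) (v := a), SimpleGraph.dist_comm (u := k) (v := a)] at hak
  rw [SimpleGraph.dist_comm (u := j) (v := b), SimpleGraph.dist_comm (u := k) (v := b)] at hbk
  set d := G.dist b k with hd
  have haj : G.dist a j = d := by omega
  have hbj : G.dist b j = d + 1 := by omega
  have hak' : G.dist a k = d + 1 := hk
  rcases Nat.eq_zero_or_pos d with hd0 | hd0
  · -- then a = j, b = k, contradiction with h1
    have hbk0 : b = k := by
      have : G.dist b k = 0 := by omega
      exact (hG.isConnected.dist_eq_zero_iff).mp this
    have haj0 : a = j := by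
      have : G.dist a j = 0 := by omega
      exact (hG.isConnected.dist_eq_zero_iff).mp this
    exact h1 (by rw [haj0, hbk0])
  · -- d ≥ 1 : build two shortest paths from b to j and use uniqueness
    obtain ⟨R, hR⟩ := hG.isConnected.exists_walk_length_eq_dist b k
    obtain ⟨Q, hQ⟩ := hG.isConnected.exists_walk_length_eq_dist a j
    have hW2len : (R.concat hjk.symm).length = G.dist b j := by
      rw [SimpleGraph.Walk.length_concat, hR]; omega
    have hW1len : (SimpleGraph.Walk.cons hab.symm Q).length = G.dist b j := by
      rw [SimpleGraph.Walk.length_cons, hQ]; omega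
    have hW2 : (R.concat hjk.symm).IsPath :=
      SimpleGraph.Walk.isPath_of_length_eq_dist _ hW2len
    have hW1 : (SimpleGraph.Walk.cons hab.symm Q).IsPath :=
      SimpleGraph.Walk.isPath_of_length_eq_dist _ hW1len
    have heq := hG.IsAcyclic.path_unique ⟨SimpleGraph.Walk.cons hab.symm Q, hW1⟩
      ⟨R.concat hjk.symm, hW2⟩
    have heq' : SimpleGraph.Walk.cons hab.symm Q = R.concat hjk.symm :=
      congrArg Subtype.val heq
    have haW1 : a ∈ (SimpleGraph.Walk.cons hab.symm Q).support := by
      rw [SimpleGraph.Walk.support_cons]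
      exact List.mem_cons_of_mem _ Q.start_mem_support
    rw [heq'] at haW1
    rw [SimpleGraph.Walk.support_concat, List.mem_append] at haW1
    have haR : a ∈ R.support := by
      rcases haW1 with h | h
      · exact h
      · exfalso
        have : a = j := by simpa using h
        rw [this] at haj
        simp [SimpleGraph.dist_self] at haj
        omega
    have : G.dist a k ≤ (R.dropUntil a haR).length := SimpleGraph.dist_le _
    have hle : (R.dropUntil a haR).length ≤ R.length :=
      SimpleGraph.Walk.length_dropUntil_le R haR
    omega

/-- Tree-orientation vector satisfies detailed balance: if `M` is detailed
balanced w.r.t. some positive vector, and `wG` is defined from a tree `G` by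
orienting every edge toward `k` and multiplying the corresponding entries of
`M`, then `wG` itself satisfies detailed balance with `M`. -/
theorem tree_orientation_detailed_balance (n : ℕ) (hn : 1 ≤ n)
    (M : Matrix (Fin n) (Fin n) ℝ)
    (w₀ : Fin n → ℝ) (hw₀ : ∀ i, 0 < w₀ i)
    (hdb : ∀ i j, M i j * w₀ j = M j i * w₀ i)
    (G : SimpleGraph (Fin n)) (hG : G.IsTree)
    (wG : Fin n → ℝ)
    (hwG : ∀ k : Fin n, wG k =
      ∏ p ∈ Finset.univ.filter
          (fun p : Fin n × Fin n => G.Adj p.1 p.2 ∧ G.dist p.1 k = G.dist p.2 k + 1),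
        M p.1 p.2) :
    ∀ j k : Fin n, M k j * wG k = M j k * wG j := by
  -- convenient notation for the edge sets
  set S : Fin n → Finset (Fin n × Fin n) := fun k => Finset.univ.filter
      (fun p : Fin n × Fin n => G.Adj p.1 p.2 ∧ G.dist p.1 k = G.dist p.2 k + 1) with hS
  -- Step 1: adjacent detailed balance of wG * w₀
  have hadj : ∀ j k : Fin n, G.Adj j k → wG k * w₀ k = wG j * w₀ j := by
    intro j k hjk
    have hmemk : (j, k) ∈ S k := by
      simp only [hS, Finset.mem_filter, Finset.mem_univ, true_and]
      exact ⟨hjk, by rw [SimpleGraph.dist_self, SimpleGraph.dist_eq_one_iff_adj.mpr hjk]⟩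
    have hmemj : (k, j) ∈ S j := by
      simp only [hS, Finset.mem_filter, Finset.mem_univ, true_and]
      exact ⟨hjk.symm, by
        rw [SimpleGraph.dist_self, SimpleGraph.dist_eq_one_iff_adj.mpr hjk.symm]⟩
    have hsets : (S k).erase (j, k) = (S j).erase (k, j) := by
      ext p
      simp only [hS, Finset.mem_erase, Finset.mem_filter, Finset.mem_univ, true_and]
      constructor
      · rintro ⟨hne, hadj, hdist⟩
        have hne2 : p ≠ (k, j) := by
          rintro rfl
          simp only at hdist
          rw [SimpleGraph.dist_self, SimpleGraph.dist_eq_one_iff_adj.mpr hjk] at hdist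
          omega
        refine ⟨hne2, hadj, ?_⟩
        exact tree_orientation_transfer hG hjk hadj
          (by rwa [← Prod.mk.eta (p := p)] at hne)
          (by rwa [← Prod.mk.eta (p := p)] at hne2) hdist
      · rintro ⟨hne, hadj, hdist⟩
        have hne2 : p ≠ (j, k) := by
          rintro rfl
          simp only at hdist
          rw [SimpleGraph.dist_self, SimpleGraph.dist_eq_one_iff_adj.mpr hjk.symm] at hdist
          omega
        refine ⟨hne2, hadj, ?_⟩
        exact tree_orientation_transfer hG hjk.symm hadj
          (by rwa [← Prod.mk.eta (p := p)] at hne)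
          (by rwa [← Prod.mk.eta (p := p)] at hne2) hdist
    have hwk : wG k = M j k * ∏ p ∈ (S k).erase (j, k), M p.1 p.2 := by
      rw [hwG k, ← Finset.mul_prod_erase _ _ hmemk]
    have hwj : wG j = M k j * ∏ p ∈ (S j).erase (k, j), M p.1 p.2 := by
      rw [hwG j, ← Finset.mul_prod_erase _ _ hmemj]
    rw [hwk, hwj, hsets]
    linear_combination (∏ p ∈ (S j).erase (k, j), M p.1 p.2) * hdb j k
  -- Step 2: wG k * w₀ k is constant over all vertices, by connectivity
  have hconst : ∀ u v : Fin n, wG u * w₀ u = wG v * w₀ v := by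
    intro u v
    obtain ⟨w⟩ := hG.isConnected.preconnected u v
    induction w with
    | nil => rfl
    | cons h p ih => exact (hadj _ _ h).symm.trans ih
  -- Step 3: conclude
  intro j k
  have hk0 : w₀ k ≠ 0 := (hw₀ k).ne'
  have key : M k j * wG k * w₀ k = M j k * wG j * w₀ k := by
    calc M k j * wG k * w₀ k = M k j * (wG k * w₀ k) := by ring
    _ = M k j * (wG j * w₀ j) := by rw [hconst k j]
    _ = (M k j * w₀ j) * wG j := by ring
    _ = (M j k * w₀ k) * wG j := by rw [hdb k j]
    _ = M j k * wG j * w₀ k := by ring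
  exact mul_right_cancel₀ hk0 key
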